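/- arXiv:1705.06558 — 2 statements merged into one kernel-verified Lean document; each statement's English description precedes it below -/
import Mathlib

section
/- (S-procedure) Let M ≥ 1 and, for n ∈ {1,2}, let Y_n ∈ ℂ^{M×M} be Hermitian, y_n ∈ ℂ^M, and c_n ∈ ℝ, and define m_n(x) = x^H Y_n x + 2 Re(x^H y_n) + c_n for x ∈ ℂ^M (a real-valued function since Y_n is Hermitian). Suppose there exists x̌ ∈ ℂ^M with m_2(x̌) < 0. Then the following are equivalent: (1) for all x ∈ ℂ^M, m_2(x) ≤ 0 implies m_1(x) ≥ 0; (2) there exists β ≥ 0 such that the (M+1)×(M+1) block matrix [[Y_1, y_1],[y_1^H, c_1]] + β·[[Y_2, y_2],[y_2^H, c_2]] is positive semidefinite. -/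
open Matrix BigOperators
open scoped ComplexOrder

noncomputable section

/-- The `(M+1) × (M+1)` Hermitian block matrix `[[A, b], [bᴴ, c]]`. -/
def blockMat {M : ℕ} (A : Matrix (Fin M) (Fin M) ℂ) (b : Fin M → ℂ) (c : ℝ) :
    Matrix (Fin M ⊕ Fin 1) (Fin M ⊕ Fin 1) ℂ :=
  Matrix.fromBlocks A (Matrix.of fun i (_ : Fin 1) => b i)
    (Matrix.of fun (_ : Fin 1) j => star (b j)) (Matrix.of fun _ _ => (c : ℂ))

/-- The real-valued quadratic function `m(x) = xᴴ Y x + 2 Re(xᴴ y) + c`. -/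
def quadFun {M : ℕ} (Y : Matrix (Fin M) (Fin M) ℂ) (y : Fin M → ℂ) (c : ℝ)
    (x : Fin M → ℂ) : ℝ :=
  (star x ⬝ᵥ Y.mulVec x).re + 2 * (star x ⬝ᵥ y).re + c

section Aux

set_option linter.unusedSectionVars false

variable {ι : Type*} [Fintype ι] [DecidableEq ι]

/-- The real quadratic form associated to a matrix. -/
def rq (B : Matrix ι ι ℂ) (z : ι → ℂ) : ℝ := (star z ⬝ᵥ B.mulVec z).re

lemma rq_zero (B : Matrix ι ι ℂ) : rq B (0 : ι → ℂ) = 0 := by simp [rq]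

lemma conj_dot_herm {B : Matrix ι ι ℂ} (hB : B.IsHermitian) (u v : ι → ℂ) :
    (starRingEnd ℂ) (star u ⬝ᵥ B.mulVec v) = star v ⬝ᵥ B.mulVec u := by
  show star _ = _
  conv_rhs => rw [star_dotProduct]
  apply congrArg star
  rw [star_mulVec, ← dotProduct_mulVec, hB.eq]

lemma dot_herm_real {B : Matrix ι ι ℂ} (hB : B.IsHermitian) (z : ι → ℂ) :
    (star z ⬝ᵥ B.mulVec z : ℂ) = ((rq B z : ℝ) : ℂ) := by
  rw [rq, Complex.conj_eq_iff_re.mp (conj_dot_herm hB z z)]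

lemma cross_herm {B : Matrix ι ι ℂ} (hB : B.IsHermitian) (u v : ι → ℂ) :
    (star v ⬝ᵥ B.mulVec u).re = (star u ⬝ᵥ B.mulVec v).re := by
  rw [← conj_dot_herm hB u v, Complex.conj_re]

lemma rq_expand {B : Matrix ι ι ℂ} (hB : B.IsHermitian) (u v : ι → ℂ) (a b : ℝ) :
    rq B ((a : ℂ) • u + (b : ℂ) • v) =
      a ^ 2 * rq B u + b ^ 2 * rq B v + 2 * a * b * (star u ⬝ᵥ B.mulVec v).re := by
  simp only [rq, star_add, star_smul, mulVec_add, mulVec_smul, dotProduct_add,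
    add_dotProduct, smul_dotProduct, dotProduct_smul, smul_eq_mul,
    Complex.star_def, Complex.conj_ofReal]
  simp only [Complex.add_re, mul_assoc, ← Complex.ofReal_mul, Complex.re_ofReal_mul]
  rw [cross_herm hB u v]
  ring

lemma rq_real_smul (B : Matrix ι ι ℂ) (a : ℝ) (z : ι → ℂ) :
    rq B ((a : ℂ) • z) = a ^ 2 * rq B z := by
  simp only [rq, star_smul, mulVec_smul, smul_dotProduct, dotProduct_smul, smul_eq_mul,
    Complex.star_def, Complex.conj_ofReal, mul_assoc, ← Complex.ofReal_mul,
    Complex.re_ofReal_mul]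
  ring

lemma rq_unit_smul (B : Matrix ι ι ℂ) {φ : ℂ} (hφ : ‖φ‖ = 1) (z : ι → ℂ) :
    rq B (φ • z) = rq B z := by
  simp only [rq, star_smul, mulVec_smul, smul_dotProduct, dotProduct_smul, smul_eq_mul,
    Complex.star_def]
  rw [show φ * ((starRingEnd ℂ) φ * (star z ⬝ᵥ B.mulVec z)) =
    φ * (starRingEnd ℂ) φ * (star z ⬝ᵥ B.mulVec z) from (mul_assoc _ _ _).symm,
    Complex.mul_conj]
  have : Complex.normSq φ = 1 := by rw [← Complex.sq_norm, hφ]; norm_num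
  rw [this, Complex.ofReal_one, one_mul]

lemma nsq_eq (z : ι → ℂ) : rq 1 z = ∑ i, Complex.normSq (z i) := by
  simp [rq, dotProduct, Complex.re_sum, Complex.normSq_apply, Complex.mul_re]

lemma nsq_nonneg (z : ι → ℂ) : 0 ≤ rq 1 z := by
  rw [nsq_eq]; exact Finset.sum_nonneg fun i _ => Complex.normSq_nonneg _

lemma nsq_eq_zero {z : ι → ℂ} (h : rq 1 z = 0) : z = 0 := by
  rw [nsq_eq] at h
  funext i
  have := (Finset.sum_eq_zero_iff_of_nonneg (fun i _ => Complex.normSq_nonneg (z i))).mp h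
    i (Finset.mem_univ i)
  simpa [Complex.normSq_eq_zero] using this

lemma rq_comb (B₁ B₂ : Matrix ι ι ℂ) (a b e : ℝ) (z : ι → ℂ) :
    rq ((a : ℂ) • B₁ + (b : ℂ) • B₂ + (e : ℂ) • 1) z
      = a * rq B₁ z + b * rq B₂ z + e * rq 1 z := by
  simp only [rq, add_mulVec, smul_mulVec, dotProduct_add, dotProduct_smul,
    smul_eq_mul, Complex.add_re, Complex.re_ofReal_mul]

lemma rq_add_smul (B₁ B₂ : Matrix ι ι ℂ) (b : ℝ) (z : ι → ℂ) :
    rq (B₁ + (b : ℂ) • B₂) z = rq B₁ z + b * rq B₂ z := by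
  simp only [rq, add_mulVec, smul_mulVec, dotProduct_add, dotProduct_smul,
    smul_eq_mul, Complex.add_re, Complex.re_ofReal_mul]

lemma exists_phase (c : ℂ) : ∃ φ : ℂ, ‖φ‖ = 1 ∧ ((starRingEnd ℂ) φ * c).re = 0 := by
  by_cases h : c = 0
  · exact ⟨1, by simp, by simp [h]⟩
  · have habs : ((‖c‖ : ℝ) : ℂ) ≠ 0 := by simpa using norm_ne_zero_iff.mpr h
    refine ⟨Complex.I * c / ((‖c‖ : ℝ) : ℂ), ?_, ?_⟩
    · rw [norm_div, norm_mul, Complex.norm_I, Complex.norm_real, one_mul,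
        norm_norm, div_self (norm_ne_zero_iff.mpr h)]
    · have key : (starRingEnd ℂ) (Complex.I * c / ((‖c‖ : ℝ) : ℂ)) * c
          = -Complex.I * ((‖c‖ : ℝ) : ℂ) := by
        rw [map_div₀, _root_.map_mul, Complex.conj_I, Complex.conj_ofReal]
        rw [div_mul_eq_mul_div, mul_assoc, mul_comm ((starRingEnd ℂ) c) c, Complex.mul_conj]
        rw [Complex.normSq_eq_norm_sq]
        field_simp
        push_cast
        ring
      rw [key]
      simp

/-- Core lemma in the style of the Toeplitz–Hausdorff theorem. -/
lemma th_core {B₁ B₂ : Matrix ι ι ℂ} (hB₁ : B₁.IsHermitian) (hB₂ : B₂.IsHermitian)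
    (u v : ι → ℂ) (hu : rq 1 u = 1) (hv : rq 1 v = 1)
    {α : ℝ} (hα : 0 < α)
    (h1u : rq B₁ u = α) (h2u : rq B₂ u = 0) (h1v : rq B₁ v = 0) (h2v : rq B₂ v = 0)
    {t : ℝ} (ht : t ∈ Set.Icc (0:ℝ) α) :
    ∃ w : ι → ℂ, rq 1 w = 1 ∧ rq B₁ w = t ∧ rq B₂ w = 0 := by
  obtain ⟨φ, hφ, hre⟩ := exists_phase (star u ⬝ᵥ B₂.mulVec v)
  set u' : ι → ℂ := φ • u with hu'
  have hru' : ∀ B : Matrix ι ι ℂ, rq B u' = rq B u := fun B => rq_unit_smul B hφ u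
  have hcross2 : (star u' ⬝ᵥ B₂.mulVec v).re = 0 := by
    rw [hu']
    rw [show star (φ • u) ⬝ᵥ B₂.mulVec v = (starRingEnd ℂ) φ * (star u ⬝ᵥ B₂.mulVec v) from by
      simp [star_smul, smul_dotProduct, Complex.star_def]]
    exact hre
  set w : ℝ → (ι → ℂ) := fun s => ((s:ℝ) : ℂ) • u' + (((1-s : ℝ)) : ℂ) • v with hw
  have hn : ∀ s, rq 1 (w s) = s^2 + (1-s)^2 + 2*s*(1-s)*(star u' ⬝ᵥ v).re := by
    intro s
    have := rq_expand (Matrix.isHermitian_one) u' v s (1-s)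
    simpa [hw, hru', hu, hv, Matrix.one_mulVec] using this
  have hr1 : ∀ s, rq B₁ (w s) = s^2 * α + 2*s*(1-s)*(star u' ⬝ᵥ B₁.mulVec v).re := by
    intro s
    have := rq_expand hB₁ u' v s (1-s)
    rw [hru', h1u, h1v] at this
    rw [hw]; rw [this]; ring
  have hr2 : ∀ s, rq B₂ (w s) = 0 := by
    intro s
    have := rq_expand hB₂ u' v s (1-s)
    rw [hru', h2u, h2v, hcross2] at this
    rw [hw]; rw [this]; ring
  have hnpos : ∀ s ∈ Set.Icc (0:ℝ) 1, 0 < rq 1 (w s) := by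
    intro s hs
    rcases lt_or_eq_of_le (nsq_nonneg (w s)) with h | h
    · exact h
    have hws : w s = 0 := nsq_eq_zero h.symm
    exfalso
    have hkey : ((s:ℝ):ℂ) • u' = (((s-1:ℝ)):ℂ) • v := by
      have h0 : ((s:ℝ):ℂ) • u' + (((1-s:ℝ)):ℂ) • v = 0 := hws
      have : ((s:ℝ):ℂ) • u' = -((((1-s:ℝ)):ℂ) • v) := by
        rw [← sub_eq_zero]; rw [sub_neg_eq_add]; exact h0
      rw [this, ← neg_smul]
      congr 1
      push_cast
      ring
    have h2 := congrArg (rq 1) hkey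
    rw [rq_real_smul, rq_real_smul, hru' 1, hu, hv] at h2
    have h12 : s = 1/2 := by nlinarith [hs.1, hs.2]
    have huv : u' = -v := by
      have h0 : ((s:ℝ):ℂ) • u' + (((1-s:ℝ)):ℂ) • v = 0 := hws
      rw [h12] at h0
      norm_num at h0
      have h2' : u' + v = 0 := by
        have := smul_eq_zero.mp (show ((1/2 : ℝ):ℂ) • (u' + v) = 0 from by
          rw [smul_add]; push_cast; convert h0 using 2 <;> norm_num)
        rcases this with h | h
        · exfalso; revert h; norm_num
        · exact h
      linear_combination (norm := module) h2'
    have hfin : rq B₁ u' = rq B₁ v := by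
      rw [huv, show -v = (((-1:ℝ)):ℂ) • v from by push_cast; module, rq_real_smul]
      ring
    rw [hru', h1u, h1v] at hfin
    exact hα.ne' hfin
  set g : ℝ → ℝ := fun s => rq B₁ (w s) / rq 1 (w s) with hg
  have hg0 : g 0 = 0 := by simp [hg, hr1 0]
  have hg1 : g 1 = α := by simp [hg, hr1 1, hn 1]
  have hcont : ContinuousOn g (Set.Icc 0 1) := by
    apply ContinuousOn.div
    · have : (fun s => rq B₁ (w s)) = fun s => s^2 * α + 2*s*(1-s)*(star u' ⬝ᵥ B₁.mulVec v).re := by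
        funext s; exact hr1 s
      rw [this]; fun_prop
    · have : (fun s => rq 1 (w s)) = fun s => s^2 + (1-s)^2 + 2*s*(1-s)*(star u' ⬝ᵥ v).re := by
        funext s; exact hn s
      rw [this]; fun_prop
    · intro s hs; exact (hnpos s hs).ne'
  have hmem : t ∈ Set.Icc (g 0) (g 1) := by rw [hg0, hg1]; exact ht
  obtain ⟨s, hs, hgs⟩ := intermediate_value_Icc (by norm_num : (0:ℝ) ≤ 1) hcont hmem
  set lam := rq 1 (w s) with hlam
  have hlampos : 0 < lam := hnpos s hs
  refine ⟨((Real.sqrt (1/lam) : ℝ) : ℂ) • w s, ?_, ?_, ?_⟩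
  · rw [rq_real_smul, Real.sq_sqrt (by positivity)]
    field_simp
    exact hlam.symm
  · rw [rq_real_smul, Real.sq_sqrt (by positivity)]
    rw [← hgs]
    simp only [hg]
    field_simp
    rw [← hlam, mul_div_cancel_left₀ _ hlampos.ne']
  · rw [rq_real_smul, hr2 s]; ring

lemma herm_comb {B₁ B₂ : Matrix ι ι ℂ} (hB₁ : B₁.IsHermitian) (hB₂ : B₂.IsHermitian)
    (a b e : ℝ) : ((a : ℂ) • B₁ + (b : ℂ) • B₂ + (e : ℂ) • 1).IsHermitian := by
  simp [Matrix.IsHermitian, Matrix.conjTranspose_add, Matrix.conjTranspose_smul,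
    Complex.star_def, Complex.conj_ofReal, hB₁.eq, hB₂.eq]

/-- Convexity of the joint range on the unit sphere (Toeplitz–Hausdorff for pairs). -/
lemma th_sphere {B₁ B₂ : Matrix ι ι ℂ} (hB₁ : B₁.IsHermitian) (hB₂ : B₂.IsHermitian)
    (u v : ι → ℂ) (hu : rq 1 u = 1) (hv : rq 1 v = 1) {t : ℝ} (ht : t ∈ Set.Icc (0:ℝ) 1) :
    ∃ w : ι → ℂ, rq 1 w = 1 ∧
      rq B₁ w = t * rq B₁ u + (1-t) * rq B₁ v ∧
      rq B₂ w = t * rq B₂ u + (1-t) * rq B₂ v := by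
  by_cases hpq : rq B₁ u = rq B₁ v ∧ rq B₂ u = rq B₂ v
  · exact ⟨u, hu, by rw [hpq.1]; ring, by rw [hpq.2]; ring⟩
  obtain ⟨q₁, hq₁⟩ : ∃ q₁ : ℝ, q₁ = rq B₁ v := ⟨_, rfl⟩
  obtain ⟨q₂, hq₂⟩ : ∃ q₂ : ℝ, q₂ = rq B₂ v := ⟨_, rfl⟩
  obtain ⟨p₁, hp₁⟩ : ∃ p₁ : ℝ, p₁ = rq B₁ u := ⟨_, rfl⟩
  obtain ⟨p₂, hp₂⟩ : ∃ p₂ : ℝ, p₂ = rq B₂ u := ⟨_, rfl⟩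
  have hDpos : 0 < (p₁ - q₁)^2 + (p₂ - q₂)^2 := by
    rcases not_and_or.mp hpq with h | h
    · have : p₁ - q₁ ≠ 0 := by rw [hp₁, hq₁]; exact sub_ne_zero.mpr h
      positivity
    · have : p₂ - q₂ ≠ 0 := by rw [hp₂, hq₂]; exact sub_ne_zero.mpr h
      positivity
  have h1u' : rq (((p₁-q₁ : ℝ) : ℂ) • B₁ + ((p₂-q₂ : ℝ) : ℂ) • B₂
      + ((-( (p₁-q₁)*q₁ + (p₂-q₂)*q₂ ) : ℝ) : ℂ) • 1) u = (p₁ - q₁)^2 + (p₂ - q₂)^2 := by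
    rw [rq_comb, hu, ← hp₁, ← hp₂]; ring
  have h1v' : rq (((p₁-q₁ : ℝ) : ℂ) • B₁ + ((p₂-q₂ : ℝ) : ℂ) • B₂
      + ((-( (p₁-q₁)*q₁ + (p₂-q₂)*q₂ ) : ℝ) : ℂ) • 1) v = 0 := by
    rw [rq_comb, hv, ← hq₁, ← hq₂]; ring
  have h2u' : rq (((-(p₂-q₂) : ℝ) : ℂ) • B₁ + ((p₁-q₁ : ℝ) : ℂ) • B₂
      + (((p₂-q₂)*q₁ - (p₁-q₁)*q₂ : ℝ) : ℂ) • 1) u = 0 := by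
    rw [rq_comb, hu, ← hp₁, ← hp₂]; ring
  have h2v' : rq (((-(p₂-q₂) : ℝ) : ℂ) • B₁ + ((p₁-q₁ : ℝ) : ℂ) • B₂
      + (((p₂-q₂)*q₁ - (p₁-q₁)*q₂ : ℝ) : ℂ) • 1) v = 0 := by
    rw [rq_comb, hv, ← hq₁, ← hq₂]; ring
  have htD : t * ((p₁ - q₁)^2 + (p₂ - q₂)^2) ∈ Set.Icc (0:ℝ) ((p₁ - q₁)^2 + (p₂ - q₂)^2) := by
    constructor
    · exact mul_nonneg ht.1 hDpos.le
    · nlinarith [ht.2, hDpos]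
  obtain ⟨w, hw1, hw2, hw3⟩ := th_core (herm_comb hB₁ hB₂ _ _ _) (herm_comb hB₁ hB₂ _ _ _)
    u v hu hv hDpos h1u' h2u' h1v' h2v' htD
  rw [rq_comb, hw1] at hw2 hw3
  refine ⟨w, hw1, ?_, ?_⟩
  · have key : ((p₁ - q₁)^2 + (p₂ - q₂)^2) * rq B₁ w
        = ((p₁ - q₁)^2 + (p₂ - q₂)^2) * (t * p₁ + (1-t) * q₁) := by
      linear_combination (p₁ - q₁) * hw2 - (p₂ - q₂) * hw3
    have := mul_left_cancel₀ hDpos.ne' key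
    rw [this, hp₁, hq₁]
  · have key : ((p₁ - q₁)^2 + (p₂ - q₂)^2) * rq B₂ w
        = ((p₁ - q₁)^2 + (p₂ - q₂)^2) * (t * p₂ + (1-t) * q₂) := by
      linear_combination (p₂ - q₂) * hw2 + (p₁ - q₁) * hw3
    have := mul_left_cancel₀ hDpos.ne' key
    rw [this, hp₂, hq₂]

lemma rescale (B₁ B₂ : Matrix ι ι ℂ) {u : ι → ℂ} (hu : u ≠ 0) :
    ∃ w : ι → ℂ, rq 1 w = 1 ∧ rq B₁ u = rq 1 u * rq B₁ w ∧ rq B₂ u = rq 1 u * rq B₂ w := by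
  have hnu : 0 < rq 1 u := by
    rcases lt_or_eq_of_le (nsq_nonneg u) with h | h
    · exact h
    · exact absurd (nsq_eq_zero h.symm) hu
  refine ⟨((Real.sqrt (1 / rq 1 u) : ℝ) : ℂ) • u, ?_, ?_, ?_⟩ <;>
    rw [rq_real_smul, Real.sq_sqrt (by positivity)] <;> field_simp

/-- Convexity of the joint range (conical version). -/
lemma th_cone {B₁ B₂ : Matrix ι ι ℂ} (hB₁ : B₁.IsHermitian) (hB₂ : B₂.IsHermitian) :
    Convex ℝ {p : ℝ × ℝ | ∃ z : ι → ℂ, p = (rq B₁ z, rq B₂ z)} := by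
  rintro p ⟨u, rfl⟩ q ⟨v, rfl⟩ a b ha hb hab
  show ∃ z : ι → ℂ, _ = (rq B₁ z, rq B₂ z)
  by_cases hu0 : u = 0
  · subst hu0
    refine ⟨((Real.sqrt b : ℝ) : ℂ) • v, ?_⟩
    have hs : Real.sqrt b ^ 2 = b := Real.sq_sqrt hb
    have h1 : rq B₁ (((Real.sqrt b : ℝ) : ℂ) • v) = b * rq B₁ v := by
      rw [rq_real_smul, hs]
    have h2 : rq B₂ (((Real.sqrt b : ℝ) : ℂ) • v) = b * rq B₂ v := by
      rw [rq_real_smul, hs]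
    have hpair : a • ((rq B₁ (0 : ι → ℂ) : ℝ), (rq B₂ (0 : ι → ℂ) : ℝ))
        + b • ((rq B₁ v : ℝ), (rq B₂ v : ℝ)) = (b * rq B₁ v, b * rq B₂ v) := by
      rw [rq_zero, rq_zero]
      simp [Prod.ext_iff, smul_eq_mul]
    rw [hpair, Prod.mk.injEq]
    exact ⟨h1.symm, h2.symm⟩
  by_cases hv0 : v = 0
  · subst hv0
    refine ⟨((Real.sqrt a : ℝ) : ℂ) • u, ?_⟩
    have hs : Real.sqrt a ^ 2 = a := Real.sq_sqrt ha
    have h1 : rq B₁ (((Real.sqrt a : ℝ) : ℂ) • u) = a * rq B₁ u := by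
      rw [rq_real_smul, hs]
    have h2 : rq B₂ (((Real.sqrt a : ℝ) : ℂ) • u) = a * rq B₂ u := by
      rw [rq_real_smul, hs]
    have hpair : a • ((rq B₁ u : ℝ), (rq B₂ u : ℝ))
        + b • ((rq B₁ (0 : ι → ℂ) : ℝ), (rq B₂ (0 : ι → ℂ) : ℝ)) = (a * rq B₁ u, a * rq B₂ u) := by
      rw [rq_zero, rq_zero]
      simp [Prod.ext_iff, smul_eq_mul]
    rw [hpair, Prod.mk.injEq]
    exact ⟨h1.symm, h2.symm⟩
  obtain ⟨u', hu'1, hu'2, hu'3⟩ := rescale B₁ B₂ hu0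
  obtain ⟨v', hv'1, hv'2, hv'3⟩ := rescale B₁ B₂ hv0
  have hnu : 0 < rq 1 u := by
    rcases lt_or_eq_of_le (nsq_nonneg u) with h | h
    · exact h
    · exact absurd (nsq_eq_zero h.symm) hu0
  have hnv : 0 < rq 1 v := by
    rcases lt_or_eq_of_le (nsq_nonneg v) with h | h
    · exact h
    · exact absurd (nsq_eq_zero h.symm) hv0
  by_cases ha0 : a = 0
  · subst ha0
    have hb1 : b = 1 := by linarith
    subst hb1
    exact ⟨v, by simp [Prod.ext_iff]⟩
  by_cases hb0 : b = 0
  · subst hb0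
    have ha1 : a = 1 := by linarith
    subst ha1
    exact ⟨u, by simp [Prod.ext_iff]⟩
  have ha' : 0 < a := lt_of_le_of_ne ha (Ne.symm ha0)
  have hb' : 0 < b := lt_of_le_of_ne hb (Ne.symm hb0)
  have hlam : 0 < a * rq 1 u + b * rq 1 v := by positivity
  set lam := a * rq 1 u + b * rq 1 v with hlamdef
  set t := a * rq 1 u / lam with htdef
  have ht : t ∈ Set.Icc (0:ℝ) 1 := by
    constructor
    · positivity
    · rw [htdef, div_le_one hlam]; nlinarith
  obtain ⟨w, hw1, hw2, hw3⟩ := th_sphere hB₁ hB₂ u' v' hu'1 hv'1 ht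
  refine ⟨((Real.sqrt lam : ℝ) : ℂ) • w, ?_⟩
  have hsq : Real.sqrt lam ^ 2 = lam := Real.sq_sqrt hlam.le
  have h1mt : 1 - t = b * rq 1 v / lam := by
    rw [htdef]; field_simp; rw [hlamdef]; ring
  have key1 : lam * rq B₁ w = a * rq B₁ u + b * rq B₁ v := by
    rw [hw2, h1mt, htdef, hu'2, hv'2]
    field_simp
  have key2 : lam * rq B₂ w = a * rq B₂ u + b * rq B₂ v := by
    rw [hw3, h1mt, htdef, hu'3, hv'3]
    field_simp
  have hpair : a • (rq B₁ u, rq B₂ u) + b • (rq B₁ v, rq B₂ v)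
      = (a * rq B₁ u + b * rq B₁ v, a * rq B₂ u + b * rq B₂ v) := by
    simp [Prod.ext_iff, smul_eq_mul]
  rw [hpair, Prod.mk.injEq]
  constructor
  · rw [rq_real_smul, hsq]; exact key1.symm
  · rw [rq_real_smul, hsq]; exact key2.symm

/-- Separation step of the S-procedure. -/
lemma sep_lemma {B₁ B₂ : Matrix ι ι ℂ} (hB₁ : B₁.IsHermitian) (hB₂ : B₂.IsHermitian)
    (himp : ∀ z : ι → ℂ, rq B₂ z < 0 → 0 ≤ rq B₁ z)
    (hstrict : ∃ z : ι → ℂ, rq B₂ z < 0) :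
    ∃ β : ℝ, 0 ≤ β ∧ ∀ z : ι → ℂ, 0 ≤ rq B₁ z + β * rq B₂ z := by
  set S : Set (ℝ × ℝ) := {p | ∃ z : ι → ℂ, p = (rq B₁ z, rq B₂ z)} with hS
  set O : Set (ℝ × ℝ) := Set.Iio (0:ℝ) ×ˢ Set.Iio (0:ℝ) with hO
  have hOconv : Convex ℝ O := (convex_Iio 0).prod (convex_Iio 0)
  have hOopen : IsOpen O := (isOpen_Iio).prod isOpen_Iio
  have hdisj : Disjoint O S := by
    rw [Set.disjoint_left]
    rintro ⟨p₁, p₂⟩ hp ⟨z, hz⟩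
    obtain ⟨h1, h2⟩ := hp
    simp only [Set.mem_Iio] at h1 h2
    rw [Prod.mk.injEq] at hz
    obtain ⟨rfl, rfl⟩ := hz
    exact absurd (himp z h2) (not_le.mpr h1)
  obtain ⟨f, u, hfO, hfS⟩ := geometric_hahn_banach_open hOconv hOopen (th_cone hB₁ hB₂) hdisj
  have hzeroS : ((0:ℝ), (0:ℝ)) ∈ S := ⟨0, by rw [rq_zero, rq_zero]⟩
  have hule : u ≤ 0 := by
    have := hfS _ hzeroS
    rwa [show ((0:ℝ),(0:ℝ)) = (0 : ℝ × ℝ) from rfl, map_zero] at this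
  have huge : 0 ≤ u := by
    by_contra h
    push_neg at h
    set c := f (1, 1) with hc
    have key : ∀ ε : ℝ, 0 < ε → -ε * c < u := by
      intro ε hε
      have hmem : ((-ε : ℝ), (-ε : ℝ)) ∈ O := by
        constructor <;> simpa using hε
      have := hfO _ hmem
      rwa [show ((-ε : ℝ), (-ε : ℝ)) = (-ε : ℝ) • ((1:ℝ),(1:ℝ)) from by
        simp [Prod.ext_iff], f.map_smul, smul_eq_mul] at this
    rcases le_or_gt c 0 with hc0 | hc0
    · have := key 1 one_pos
      nlinarith
    · have := key (-u / (2*c)) (div_pos (by linarith) (by linarith))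
      have h2 : -(-u / (2*c)) * c = u / 2 := by field_simp
      rw [h2] at this
      linarith
  have hu0 : u = 0 := le_antisymm hule huge
  set ξ₁ := f (1, 0) with hξ₁
  set ξ₂ := f (0, 1) with hξ₂
  have hf : ∀ x y : ℝ, f (x, y) = x * ξ₁ + y * ξ₂ := by
    intro x y
    have : ((x:ℝ), (y:ℝ)) = x • ((1:ℝ),(0:ℝ)) + y • ((0:ℝ),(1:ℝ)) := by simp [Prod.ext_iff]
    rw [this, map_add, f.map_smul, f.map_smul, smul_eq_mul, smul_eq_mul]
  have hO' : ∀ x y : ℝ, x < 0 → y < 0 → x * ξ₁ + y * ξ₂ < 0 := by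
    intro x y hx hy
    have hmem : ((x:ℝ),(y:ℝ)) ∈ O := ⟨by simpa using hx, by simpa using hy⟩
    have := hfO _ hmem
    rw [hf, hu0] at this
    exact this
  have hS' : ∀ z : ι → ℂ, 0 ≤ ξ₁ * rq B₁ z + ξ₂ * rq B₂ z := by
    intro z
    have := hfS _ ⟨z, rfl⟩
    rw [hf, hu0] at this
    linarith
  have hξ₁0 : 0 ≤ ξ₁ := by
    by_contra h
    push_neg at h
    rcases le_or_gt ξ₂ 0 with h2 | h2
    · have := hO' (-1) (-1) (by norm_num) (by norm_num)
      nlinarith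
    · have := hO' (-1) (ξ₁/(2*ξ₂)) (by norm_num) (by
        apply div_neg_of_neg_of_pos h (by positivity))
      have heq : ξ₁/(2*ξ₂)*ξ₂ = ξ₁/2 := by field_simp
      rw [heq] at this
      linarith
  have hξ₂0 : 0 ≤ ξ₂ := by
    by_contra h
    push_neg at h
    rcases le_or_gt ξ₁ 0 with h2 | h2
    · have := hO' (-1) (-1) (by norm_num) (by norm_num)
      nlinarith
    · have := hO' (ξ₂/(2*ξ₁)) (-1) (by
        apply div_neg_of_neg_of_pos h (by positivity)) (by norm_num)
      have heq : ξ₂/(2*ξ₁)*ξ₁ = ξ₂/2 := by field_simp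
      rw [heq] at this
      linarith
  have hξ₁pos : 0 < ξ₁ := by
    rcases lt_or_eq_of_le hξ₁0 with h | h
    · exact h
    exfalso
    obtain ⟨z₀, hz₀⟩ := hstrict
    have h1 := hS' z₀
    rw [← h] at h1
    have hξ₂z : ξ₂ = 0 := by nlinarith
    have := hO' (-1) (-1) (by norm_num) (by norm_num)
    rw [← h, hξ₂z] at this
    norm_num at this
  refine ⟨ξ₂ / ξ₁, by positivity, fun z => ?_⟩
  have h3 : rq B₁ z + ξ₂/ξ₁ * rq B₂ z = (ξ₁ * rq B₁ z + ξ₂ * rq B₂ z)/ξ₁ := by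
    field_simp
  rw [h3]
  exact div_nonneg (hS' z) hξ₁pos.le

end Aux

section Block

lemma blockMat_isHermitian {M : ℕ} {Y : Matrix (Fin M) (Fin M) ℂ} (hY : Y.IsHermitian)
    (y : Fin M → ℂ) (c : ℝ) : (blockMat Y y c).IsHermitian := by
  apply Matrix.IsHermitian.ext
  intro i j
  rcases i with i | i <;> rcases j with j | j <;>
    simp [blockMat, Matrix.fromBlocks, Complex.star_def, Complex.conj_ofReal]
  exact hY.apply i j

lemma evalq_aux {M : ℕ} (Y : Matrix (Fin M) (Fin M) ℂ) (y : Fin M → ℂ) (c : ℝ)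
    (x : Fin M → ℂ) (t : ℂ) :
    star (Sum.elim x fun _ : Fin 1 => t) ⬝ᵥ
        (blockMat Y y c).mulVec (Sum.elim x fun _ : Fin 1 => t) =
      star x ⬝ᵥ Y.mulVec x + t * (star x ⬝ᵥ y)
        + star t * star (star x ⬝ᵥ y) + (c : ℂ) * (star t * t) := by
  unfold blockMat
  rw [Matrix.fromBlocks_mulVec]
  have hl : ((Sum.elim x fun _ : Fin 1 => t) ∘ Sum.inl) = x := rfl
  have hr : ((Sum.elim x fun _ : Fin 1 => t) ∘ Sum.inr) = fun _ : Fin 1 => t := rfl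
  rw [hl, hr, dotProduct_block]
  have hsl : (star (Sum.elim x fun _ : Fin 1 => t) ∘ Sum.inl) = star x := rfl
  have hsr : (star (Sum.elim x fun _ : Fin 1 => t) ∘ Sum.inr) = fun _ : Fin 1 => star t := rfl
  have h1 : (Matrix.of fun i (_ : Fin 1) => y i) *ᵥ (fun _ : Fin 1 => t) = fun i => y i * t := by
    funext i; simp [Matrix.mulVec, dotProduct]
  have h2 : (Matrix.of fun (_ : Fin 1) j => star (y j)) *ᵥ x = fun _ : Fin 1 => star y ⬝ᵥ x := by
    funext i; simp [Matrix.mulVec, dotProduct]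
  have h3 : (Matrix.of fun (_ : Fin 1) (_ : Fin 1) => (c : ℂ)) *ᵥ (fun _ : Fin 1 => t)
      = fun _ : Fin 1 => (c : ℂ) * t := by
    funext i; simp [Matrix.mulVec, dotProduct]
  have hfin1 : ∀ v w : Fin 1 → ℂ, v ⬝ᵥ w = v 0 * w 0 := by
    intro v w; simp [dotProduct]
  rw [show (Sum.elim (Y.mulVec x + (Matrix.of fun i (_ : Fin 1) => y i) *ᵥ (fun _ : Fin 1 => t))
      (((Matrix.of fun (_ : Fin 1) j => star (y j)) *ᵥ x)
        + (Matrix.of fun (_ : Fin 1) (_ : Fin 1) => (c : ℂ)) *ᵥ (fun _ : Fin 1 => t)))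
      ∘ Sum.inl = Y.mulVec x + (Matrix.of fun i (_ : Fin 1) => y i) *ᵥ (fun _ : Fin 1 => t)
      from rfl]
  rw [show (Sum.elim (Y.mulVec x + (Matrix.of fun i (_ : Fin 1) => y i) *ᵥ (fun _ : Fin 1 => t))
      (((Matrix.of fun (_ : Fin 1) j => star (y j)) *ᵥ x)
        + (Matrix.of fun (_ : Fin 1) (_ : Fin 1) => (c : ℂ)) *ᵥ (fun _ : Fin 1 => t)))
      ∘ Sum.inr = ((Matrix.of fun (_ : Fin 1) j => star (y j)) *ᵥ x)
        + (Matrix.of fun (_ : Fin 1) (_ : Fin 1) => (c : ℂ)) *ᵥ (fun _ : Fin 1 => t)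
      from rfl]
  rw [hsl, hsr, h1, h2, h3, dotProduct_add, hfin1]
  simp only [Pi.add_apply]
  rw [show star x ⬝ᵥ (fun i => y i * t) = t * (star x ⬝ᵥ y) from by
    simp [dotProduct, Finset.mul_sum]; congr 1; funext i; ring]
  rw [show star y ⬝ᵥ x = star (star x ⬝ᵥ y) from by
    rw [star_dotProduct]]
  ring

lemma evalq {M : ℕ} (Y : Matrix (Fin M) (Fin M) ℂ) (y : Fin M → ℂ) (c : ℝ)
    (x : Fin M → ℂ) (t : ℂ) :
    rq (blockMat Y y c) (Sum.elim x fun _ : Fin 1 => t) =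
      (star x ⬝ᵥ Y.mulVec x).re + 2 * (t * (star x ⬝ᵥ y)).re + c * Complex.normSq t := by
  rw [rq, evalq_aux]
  simp only [Complex.add_re]
  rw [show star t * star (star x ⬝ᵥ y) = star (t * (star x ⬝ᵥ y)) from
    (star_mul' t (star x ⬝ᵥ y)).symm]
  rw [show (star (t * (star x ⬝ᵥ y)) : ℂ).re = (t * (star x ⬝ᵥ y)).re from Complex.conj_re _]
  rw [show ((c : ℂ) * (star t * t)).re = c * Complex.normSq t from by
    rw [show (star t * t : ℂ) = ((Complex.normSq t : ℝ) : ℂ) from by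
      rw [Complex.star_def, mul_comm, Complex.mul_conj], ← Complex.ofReal_mul]
    rw [Complex.ofReal_re]]
  ring

lemma evalq_one {M : ℕ} (Y : Matrix (Fin M) (Fin M) ℂ) (y : Fin M → ℂ) (c : ℝ)
    (x : Fin M → ℂ) :
    rq (blockMat Y y c) (Sum.elim x fun _ : Fin 1 => (1:ℂ)) = quadFun Y y c x := by
  rw [evalq]
  simp [quadFun]

lemma evalq_zero {M : ℕ} (Y : Matrix (Fin M) (Fin M) ℂ) (y : Fin M → ℂ) (c : ℝ)
    (x : Fin M → ℂ) :
    rq (blockMat Y y c) (Sum.elim x fun _ : Fin 1 => (0:ℂ)) = (star x ⬝ᵥ Y.mulVec x).re := by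
  rw [evalq]
  simp

lemma quadFun_smul {M : ℕ} (Y : Matrix (Fin M) (Fin M) ℂ) (y : Fin M → ℂ) (c : ℝ)
    (x : Fin M → ℂ) (a : ℂ) :
    quadFun Y y c (a • x) = Complex.normSq a * (star x ⬝ᵥ Y.mulVec x).re
      + 2 * ((starRingEnd ℂ) a * (star x ⬝ᵥ y)).re + c := by
  unfold quadFun
  rw [star_smul, Matrix.mulVec_smul, smul_dotProduct, dotProduct_smul]
  simp only [smul_eq_mul, Complex.star_def]
  rw [show (starRingEnd ℂ) a * (a * (star x ⬝ᵥ Y.mulVec x))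
      = ((Complex.normSq a : ℝ) : ℂ) * (star x ⬝ᵥ Y.mulVec x) from by
    rw [← mul_assoc, mul_comm ((starRingEnd ℂ) a) a, Complex.mul_conj]]
  rw [Complex.re_ofReal_mul, smul_dotProduct]
  simp [smul_eq_mul]

lemma quadFun_real_smul {M : ℕ} (Y : Matrix (Fin M) (Fin M) ℂ) (y : Fin M → ℂ) (c : ℝ)
    (x : Fin M → ℂ) (s : ℝ) :
    quadFun Y y c ((s : ℂ) • x) = s^2 * (star x ⬝ᵥ Y.mulVec x).re
      + 2 * s * (star x ⬝ᵥ y).re + c := by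
  rw [quadFun_smul, Complex.conj_ofReal, Complex.re_ofReal_mul, Complex.normSq_ofReal]
  ring

lemma evalq_nonzero {M : ℕ} (Y : Matrix (Fin M) (Fin M) ℂ) (y : Fin M → ℂ) (c : ℝ)
    (x : Fin M → ℂ) {t : ℂ} (ht : t ≠ 0) :
    rq (blockMat Y y c) (Sum.elim x fun _ : Fin 1 => t) =
      Complex.normSq t * quadFun Y y c (t⁻¹ • x) := by
  rw [evalq, quadFun_smul]
  have hn0 : Complex.normSq t ≠ 0 := (Complex.normSq_pos.mpr ht).ne'
  have hconj : (starRingEnd ℂ) t ≠ 0 := star_ne_zero.mpr ht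
  have h1 : Complex.normSq t * Complex.normSq t⁻¹ = 1 := by
    rw [Complex.normSq_inv]
    field_simp
  have h2 : Complex.normSq t * ((starRingEnd ℂ) t⁻¹ * (star x ⬝ᵥ y)).re
      = (t * (star x ⬝ᵥ y)).re := by
    rw [← Complex.re_ofReal_mul, ← mul_assoc]
    congr 2
    rw [show ((Complex.normSq t : ℝ) : ℂ) = t * (starRingEnd ℂ) t from (Complex.mul_conj t).symm]
    rw [map_inv₀]
    field_simp
  linear_combination -(star x ⬝ᵥ Y.mulVec x).re * h1 - 2 * h2

lemma poly_neg {a b c : ℝ} (ha : a < 0) :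
    ∃ s₀ : ℝ, ∀ s : ℝ, s₀ ≤ s → s^2*a + 2*s*b + c < 0 := by
  refine ⟨max 1 ((2*|b| + |c| + 1)/(-a)), fun s hs => ?_⟩
  have hs1 : 1 ≤ s := le_trans (le_max_left _ _) hs
  have hs2 : (2*|b| + |c| + 1)/(-a) ≤ s := le_trans (le_max_right _ _) hs
  have h3 : 2*|b| + |c| + 1 ≤ s * (-a) := (div_le_iff₀ (by linarith)).mp hs2
  have h4 : s * (2*|b|+|c|+1) ≤ s * (s * (-a)) :=
    mul_le_mul_of_nonneg_left h3 (by linarith)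
  nlinarith [le_abs_self b, le_abs_self c, abs_nonneg b, abs_nonneg c,
    mul_le_mul_of_nonneg_left (le_abs_self b) (show (0:ℝ) ≤ 2*s by linarith),
    mul_nonneg (show (0:ℝ) ≤ s - 1 by linarith) (abs_nonneg c)]

end Block

/-- The S-procedure (Lemma 1 of the paper). -/
theorem s_procedure (M : ℕ) (hM : 1 ≤ M)
    (Y₁ Y₂ : Matrix (Fin M) (Fin M) ℂ) (hY₁ : Y₁.IsHermitian) (hY₂ : Y₂.IsHermitian)
    (y₁ y₂ : Fin M → ℂ) (c₁ c₂ : ℝ)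
    (hstrict : ∃ x : Fin M → ℂ, quadFun Y₂ y₂ c₂ x < 0) :
    (∀ x : Fin M → ℂ, quadFun Y₂ y₂ c₂ x ≤ 0 → 0 ≤ quadFun Y₁ y₁ c₁ x) ↔
    (∃ β : ℝ, 0 ≤ β ∧
      (blockMat Y₁ y₁ c₁ + (β : ℂ) • blockMat Y₂ y₂ c₂).PosSemidef) := by
  constructor
  · -- hard direction
    intro hyp
    set B₁ := blockMat Y₁ y₁ c₁ with hB₁def
    set B₂ := blockMat Y₂ y₂ c₂ with hB₂def
    have hB₁ : B₁.IsHermitian := blockMat_isHermitian hY₁ y₁ c₁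
    have hB₂ : B₂.IsHermitian := blockMat_isHermitian hY₂ y₂ c₂
    have himp : ∀ z : Fin M ⊕ Fin 1 → ℂ, rq B₂ z < 0 → 0 ≤ rq B₁ z := by
      intro z hz
      obtain ⟨x, t, rfl⟩ : ∃ (x : Fin M → ℂ) (t : ℂ), z = Sum.elim x fun _ : Fin 1 => t := by
        refine ⟨z ∘ Sum.inl, z (Sum.inr 0), ?_⟩
        funext i
        rcases i with i | i
        · rfl
        · rcases i with ⟨iv, hiv⟩
          interval_cases iv
          rfl
      by_cases ht : t = 0
      · subst ht
        rw [hB₂def, evalq_zero] at hz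
        rw [hB₁def, evalq_zero]
        by_contra hneg
        push_neg at hneg
        obtain ⟨s₂, hs₂⟩ := poly_neg (a := (star x ⬝ᵥ Y₂.mulVec x).re)
          (b := (star x ⬝ᵥ y₂).re) (c := c₂) hz
        obtain ⟨s₁, hs₁⟩ := poly_neg (a := (star x ⬝ᵥ Y₁.mulVec x).re)
          (b := (star x ⬝ᵥ y₁).re) (c := c₁) hneg
        set s := max s₁ s₂ with hsdef
        have h2 : quadFun Y₂ y₂ c₂ ((s : ℂ) • x) < 0 := by
          rw [quadFun_real_smul]
          exact hs₂ s (le_max_right _ _)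
        have h1 : quadFun Y₁ y₁ c₁ ((s : ℂ) • x) < 0 := by
          rw [quadFun_real_smul]
          exact hs₁ s (le_max_left _ _)
        exact absurd (hyp _ h2.le) (not_le.mpr h1)
      · rw [hB₂def, evalq_nonzero Y₂ y₂ c₂ x ht] at hz
        rw [hB₁def, evalq_nonzero Y₁ y₁ c₁ x ht]
        have hn : 0 < Complex.normSq t := Complex.normSq_pos.mpr ht
        have hm₂ : quadFun Y₂ y₂ c₂ (t⁻¹ • x) < 0 := by
          by_contra h
          push_neg at h
          nlinarith
        have := hyp _ hm₂.le
        positivity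
    have hstrict' : ∃ z : Fin M ⊕ Fin 1 → ℂ, rq B₂ z < 0 := by
      obtain ⟨x, hx⟩ := hstrict
      exact ⟨Sum.elim x fun _ : Fin 1 => (1:ℂ), by rw [hB₂def, evalq_one]; exact hx⟩
    obtain ⟨β, hβ, hq⟩ := sep_lemma hB₁ hB₂ himp hstrict'
    refine ⟨β, hβ, ?_⟩
    have hherm : (B₁ + (β : ℂ) • B₂).IsHermitian := by
      rw [Matrix.IsHermitian, Matrix.conjTranspose_add, Matrix.conjTranspose_smul,
        hB₁.eq, hB₂.eq, Complex.star_def, Complex.conj_ofReal]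
    refine Matrix.PosSemidef.of_dotProduct_mulVec_nonneg hherm fun z => ?_
    rw [dot_herm_real hherm z]
    rw [show ((0:ℂ)) = ((0:ℝ):ℂ) from by norm_num]
    rw [Complex.real_le_real]
    rw [rq_add_smul]
    exact hq z
  · -- easy direction
    rintro ⟨β, hβ, hPSD⟩ x hx
    set z : Fin M ⊕ Fin 1 → ℂ := Sum.elim x fun _ : Fin 1 => (1:ℂ) with hzdef
    have h := hPSD.dotProduct_mulVec_nonneg z
    have hherm := hPSD.1
    rw [dot_herm_real hherm z] at h
    rw [show ((0:ℂ)) = ((0:ℝ):ℂ) from by norm_num, Complex.real_le_real] at h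
    rw [rq_add_smul] at h
    rw [hzdef, evalq_one, evalq_one] at h
    nlinarith [mul_nonneg hβ (neg_nonneg.mpr hx)]

end
end

section
/- Let M ≥ 1, let A, S ∈ ℂ^{M×M} be Hermitian matrices, let h̃ ∈ ℂ^M, and let σ^2 ∈ ℝ and T > 0 be real constants. Then the following are equivalent: (1) for all e ∈ ℂ^M with ‖e‖^2 ≤ T, one has Re(e^H (S A S) e) + 2 Re(e^H S A h̃) + Re(h̃^H A h̃) − σ^2 ≥ 0; (2) there exists α ≥ 0 such that the (M+1)×(M+1) block matrix [[S A S + α I_M, S A h̃],[(S A h̃)^H, h̃^H A h̃ − σ^2 − α T]] is positive semidefinite. -/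
open Matrix BigOperators
open scoped ComplexOrder

noncomputable section

namespace SPaux

variable {m : ℕ}

/-- Hermitian conjugate-symmetry of the sesquilinear form. -/
lemma herm_star {Q : Matrix (Fin m) (Fin m) ℂ} (hQ : Q.IsHermitian) (u v : Fin m → ℂ) :
    star (star u ⬝ᵥ Q *ᵥ v) = star v ⬝ᵥ Q *ᵥ u := by
  rw [Matrix.star_dotProduct, star_star, Matrix.star_mulVec, hQ.eq,
    Matrix.dotProduct_mulVec]

lemma dot_self_eq (u : Fin m → ℂ) :
    star u ⬝ᵥ u = ((∑ i, ‖u i‖ ^ 2 : ℝ) : ℂ) := by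
  simp only [dotProduct, Pi.star_apply, Complex.ofReal_sum]
  refine Finset.sum_congr rfl fun i _ => ?_
  rw [RCLike.star_def, Complex.conj_mul']
  norm_cast

lemma nf_nonneg (u : Fin m → ℂ) : (0:ℝ) ≤ ∑ i, ‖u i‖ ^ 2 :=
  Finset.sum_nonneg fun i _ => by positivity

lemma nf_eq_zero {u : Fin m → ℂ} (h : (∑ i, ‖u i‖ ^ 2) = 0) : u = 0 := by
  funext i
  have := (Finset.sum_eq_zero_iff_of_nonneg (fun j _ => by positivity)).mp h i (Finset.mem_univ i)
  have : ‖u i‖ = 0 := by nlinarith [norm_nonneg (u i)]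
  simpa using this

/-- Real-part expansion of the quadratic form along u + w. -/
lemma qf_add {Q : Matrix (Fin m) (Fin m) ℂ} (hQ : Q.IsHermitian) (u w : Fin m → ℂ) :
    (star (u + w) ⬝ᵥ Q *ᵥ (u + w)).re =
      (star u ⬝ᵥ Q *ᵥ u).re + 2 * (star w ⬝ᵥ Q *ᵥ u).re + (star w ⬝ᵥ Q *ᵥ w).re := by
  have key : star (u + w) ⬝ᵥ Q *ᵥ (u + w) =
      star u ⬝ᵥ Q *ᵥ u + (star u ⬝ᵥ Q *ᵥ w + star w ⬝ᵥ Q *ᵥ u) + star w ⬝ᵥ Q *ᵥ w := by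
    rw [star_add, Matrix.mulVec_add, add_dotProduct, dotProduct_add,
      dotProduct_add]
    ring
  have hcross : (star u ⬝ᵥ Q *ᵥ w + star w ⬝ᵥ Q *ᵥ u).re = 2 * (star w ⬝ᵥ Q *ᵥ u).re := by
    rw [← herm_star hQ w u, Complex.add_re, RCLike.star_def, Complex.conj_re]
    ring
  rw [key, Complex.add_re, Complex.add_re, hcross]

lemma smul_dot_re (s : ℝ) (u b : Fin m → ℂ) :
    (star ((s : ℂ) • u) ⬝ᵥ b).re = s * (star u ⬝ᵥ b).re := by
  rw [star_smul, smul_dotProduct]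
  simp [RCLike.star_def, Complex.conj_ofReal, Complex.re_ofReal_mul]

lemma qf_smul_real {Q : Matrix (Fin m) (Fin m) ℂ} (s : ℝ) (u : Fin m → ℂ) :
    (star ((s : ℂ) • u) ⬝ᵥ Q *ᵥ ((s : ℂ) • u)).re = s ^ 2 * (star u ⬝ᵥ Q *ᵥ u).re := by
  rw [star_smul, smul_dotProduct, Matrix.mulVec_smul, dotProduct_smul]
  simp only [smul_eq_mul]
  rw [show star ((s:ℂ)) * ((s:ℂ) * (star u ⬝ᵥ Q *ᵥ u)) = ((s^2 : ℝ):ℂ) * (star u ⬝ᵥ Q *ᵥ u) by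
    rw [RCLike.star_def, Complex.conj_ofReal]; push_cast; ring]
  rw [Complex.re_ofReal_mul]

lemma nf_add (u w : Fin m → ℂ) :
    (∑ i, ‖(u + w) i‖ ^ 2) = (∑ i, ‖u i‖ ^ 2) + 2 * (star w ⬝ᵥ u).re + ∑ i, ‖w i‖ ^ 2 := by
  have h1 : ((∑ i, ‖(u + w) i‖ ^ 2 : ℝ) : ℂ) = star (u + w) ⬝ᵥ (u + w) := (dot_self_eq _).symm
  have key : star (u + w) ⬝ᵥ (u + w) =
      star u ⬝ᵥ u + (star u ⬝ᵥ w + star w ⬝ᵥ u) + star w ⬝ᵥ w := by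
    rw [star_add, add_dotProduct, dotProduct_add, dotProduct_add]
    ring
  have hcross : (star u ⬝ᵥ w + star w ⬝ᵥ u).re = 2 * (star w ⬝ᵥ u).re := by
    rw [Matrix.star_dotProduct u w, Complex.add_re, RCLike.star_def, Complex.conj_re]; ring
  have := congrArg Complex.re h1
  rw [Complex.ofReal_re, key, Complex.add_re, Complex.add_re, hcross,
    dot_self_eq u, dot_self_eq w, Complex.ofReal_re, Complex.ofReal_re] at this
  rw [this]

lemma nf_smul_real (s : ℝ) (u : Fin m → ℂ) :
    (∑ i, ‖((s : ℂ) • u) i‖ ^ 2) = s ^ 2 * ∑ i, ‖u i‖ ^ 2 := by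
  simp only [Pi.smul_apply, norm_smul, Complex.norm_real, Finset.mul_sum, mul_pow]
  refine Finset.sum_congr rfl fun i _ => ?_
  rw [Real.norm_eq_abs, sq_abs]

/-- If `q + a s + b s² ≥ 0` for all small positive `s`, then `q ≥ 0`. -/
lemma key_small {q a b δ : ℝ} (hδ : 0 < δ)
    (h : ∀ s : ℝ, 0 < s → s ≤ δ → 0 ≤ q + a * s + b * s ^ 2) : 0 ≤ q := by
  by_contra hq
  push_neg at hq
  have hden : (0:ℝ) < 2 * (|a| + |b|) + 1 := by positivity
  set s := min (min δ 1) (-q / (2 * (|a| + |b|) + 1)) with hs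
  have hs0 : 0 < s := lt_min (lt_min hδ one_pos) (div_pos (by linarith) hden)
  have hsδ : s ≤ δ := le_trans (min_le_left _ _) (min_le_left _ _)
  have hs1 : s ≤ 1 := le_trans (min_le_left _ _) (min_le_right _ _)
  have hsq : s ≤ -q / (2 * (|a| + |b|) + 1) := min_le_right _ _
  have h2 := h s hs0 hsδ
  have h3 : a * s ≤ |a| * s := by nlinarith [le_abs_self a]
  have h4 : b * s ^ 2 ≤ |b| * s := by
    nlinarith [mul_nonneg (sub_nonneg.2 (le_abs_self b)) (sq_nonneg s),
      mul_nonneg (mul_nonneg (abs_nonneg b) hs0.le) (sub_nonneg.2 hs1)]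
  have h5 : s * (2 * (|a| + |b|) + 1) ≤ -q := (le_div_iff₀ hden).mp hsq
  nlinarith [abs_nonneg a, abs_nonneg b]

/-- If `a s + b s² ≥ 0` for all small positive `s`, then `a ≥ 0`. -/
lemma key_small' {a b δ : ℝ} (hδ : 0 < δ)
    (h : ∀ s : ℝ, 0 < s → s ≤ δ → 0 ≤ a * s + b * s ^ 2) : 0 ≤ a := by
  refine key_small (q := a) (a := b) (b := 0) hδ ?_
  intro s hs0 hsδ
  have h2 := h s hs0 hsδ
  by_contra hlt
  push_neg at hlt
  have : (a + b * s + 0 * s ^ 2) * s < 0 := mul_neg_of_neg_of_pos hlt hs0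
  nlinarith

/-- The abstract S-procedure for the ball constraint, over ℂ. -/
lemma s_procedure (Q : Matrix (Fin m) (Fin m) ℂ) (hQ : Q.IsHermitian)
    (b : Fin m → ℂ) (c T : ℝ) (hT : 0 < T)
    (h : ∀ e : Fin m → ℂ, (∑ i, ‖e i‖ ^ 2) ≤ T →
      0 ≤ (star e ⬝ᵥ Q *ᵥ e).re + 2 * (star e ⬝ᵥ b).re + c) :
    ∃ α : ℝ, 0 ≤ α ∧
      (∀ x : Fin m → ℂ, 0 ≤ (star x ⬝ᵥ Q *ᵥ x).re + α * ∑ i, ‖x i‖ ^ 2) ∧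
      (∀ e : Fin m → ℂ, 0 ≤ (star e ⬝ᵥ Q *ᵥ e).re + α * (∑ i, ‖e i‖ ^ 2)
          + 2 * (star e ⬝ᵥ b).re + c - α * T) := by
  classical
  obtain ⟨f, hf_def⟩ : ∃ f : (Fin m → ℂ) → ℝ,
      f = fun e => (star e ⬝ᵥ Q *ᵥ e).re + 2 * (star e ⬝ᵥ b).re + c := ⟨_, rfl⟩
  obtain ⟨N, hN_def⟩ : ∃ N : (Fin m → ℂ) → ℝ,
      N = fun d => ∑ i, ‖d i‖ ^ 2 := ⟨_, rfl⟩
  -- continuity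
  have hNcont : Continuous N := by
    rw [hN_def]
    apply continuous_finset_sum
    intro i _
    exact ((continuous_apply i).norm).pow 2
  have hdQ : Continuous fun e : Fin m → ℂ => star e ⬝ᵥ Q *ᵥ e := by
    simp only [dotProduct, Matrix.mulVec, Pi.star_apply]
    apply continuous_finset_sum
    intro i _
    exact (continuous_star.comp (continuous_apply i)).mul
      (continuous_finset_sum _ fun j _ => continuous_const.mul (continuous_apply j))
  have hdb : Continuous fun e : Fin m → ℂ => star e ⬝ᵥ b := by
    simp only [dotProduct, Pi.star_apply]
    apply continuous_finset_sum
    intro i _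
    exact (continuous_star.comp (continuous_apply i)).mul continuous_const
  have hfcont : Continuous f := by
    rw [hf_def]
    exact ((Complex.continuous_re.comp hdQ).add
      (continuous_const.mul (Complex.continuous_re.comp hdb))).add continuous_const
  -- the compact ball
  obtain ⟨K, hK_def⟩ : ∃ K : Set (Fin m → ℂ), K = {e | N e ≤ T} := ⟨_, rfl⟩
  have hmem : ∀ e : Fin m → ℂ, N e ≤ T → e ∈ K := by
    intro e he
    rw [hK_def]
    exact he
  have hmem' : ∀ e : Fin m → ℂ, e ∈ K → N e ≤ T := by
    intro e he
    rw [hK_def] at he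
    exact he
  have hKclosed : IsClosed K := by
    rw [hK_def]
    exact isClosed_le hNcont continuous_const
  have hKbdd : Bornology.IsBounded K := by
    rw [hK_def, isBounded_iff_forall_norm_le]
    refine ⟨Real.sqrt T, fun e he => ?_⟩
    have he' : N e ≤ T := he
    rw [hN_def] at he'
    rw [pi_norm_le_iff_of_nonneg (Real.sqrt_nonneg T)]
    intro i
    have h2 : ‖e i‖ ^ 2 ≤ T :=
      le_trans (Finset.single_le_sum (f := fun i => ‖e i‖ ^ 2)
        (fun j _ => by positivity) (Finset.mem_univ i)) he'
    exact (Real.le_sqrt (norm_nonneg _) hT.le).mpr h2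
  have hKc : IsCompact K := Metric.isCompact_of_isClosed_isBounded hKclosed hKbdd
  have h0K : (0 : Fin m → ℂ) ∈ K := by
    apply hmem
    rw [hN_def]
    simpa using hT.le
  obtain ⟨e₀, he₀K, he₀min⟩ := hKc.exists_isMinOn ⟨0, h0K⟩ hfcont.continuousOn
  have hmin : ∀ e ∈ K, f e₀ ≤ f e := fun e he => he₀min he
  have hNle : N e₀ ≤ T := hmem' _ he₀K
  have hNle' : (∑ i, ‖e₀ i‖ ^ 2) ≤ T := by
    have := hNle
    simp only [hN_def] at this
    exact this
  have hf0 : 0 ≤ f e₀ := by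
    rw [hf_def]
    exact h e₀ hNle'
  -- derived functionals
  obtain ⟨nq, hnq_def⟩ : ∃ nq : (Fin m → ℂ) → ℝ,
      nq = fun d => (star d ⬝ᵥ Q *ᵥ d).re := ⟨_, rfl⟩
  obtain ⟨L, hL_def⟩ : ∃ L : (Fin m → ℂ) → ℝ,
      L = fun d => (star d ⬝ᵥ Q *ᵥ e₀).re + (star d ⬝ᵥ b).re := ⟨_, rfl⟩
  obtain ⟨P, hP_def⟩ : ∃ P : (Fin m → ℂ) → ℝ,
      P = fun d => (star d ⬝ᵥ e₀).re := ⟨_, rfl⟩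
  -- expansions
  have hexp : ∀ w, f (e₀ + w) = f e₀ + nq w + 2 * L w := by
    intro w
    simp only [hf_def, hnq_def, hL_def]
    rw [qf_add hQ e₀ w]
    rw [show star (e₀ + w) ⬝ᵥ b = star e₀ ⬝ᵥ b + star w ⬝ᵥ b by
      rw [star_add, add_dotProduct]]
    rw [Complex.add_re]
    ring
  have hNexp : ∀ w, N (e₀ + w) = N e₀ + 2 * P w + N w := by
    intro w
    simp only [hN_def, hP_def]
    exact nf_add e₀ w
  have hLadd : ∀ u w, L (u + w) = L u + L w := by
    intro u w
    simp only [hL_def]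
    rw [star_add, add_dotProduct, add_dotProduct, Complex.add_re,
      Complex.add_re]
    ring
  have hLsmul : ∀ (s : ℝ) d, L ((s:ℂ) • d) = s * L d := by
    intro s d
    simp only [hL_def]
    rw [smul_dot_re, smul_dot_re]
    ring
  have hPadd : ∀ u w, P (u + w) = P u + P w := by
    intro u w
    simp only [hP_def]
    rw [star_add, add_dotProduct, Complex.add_re]
  have hPsmul : ∀ (s : ℝ) d, P ((s:ℂ) • d) = s * P d := by
    intro s d
    simp only [hP_def]
    exact smul_dot_re s d e₀
  have hnqs : ∀ (s : ℝ) d, nq ((s:ℂ) • d) = s ^ 2 * nq d := by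
    intro s d
    simp only [hnq_def]
    exact qf_smul_real s d
  have hNsm : ∀ (s : ℝ) d, N ((s:ℂ) • d) = s ^ 2 * N d := by
    intro s d
    simp only [hN_def]
    exact nf_smul_real s d
  have hNnn : ∀ d, 0 ≤ N d := by
    intro d
    simp only [hN_def]
    exact nf_nonneg d
  have hNzero : ∀ d, N d = 0 → d = 0 := by
    intro d hd
    rw [hN_def] at hd
    exact nf_eq_zero hd
  have hfs : ∀ (d : Fin m → ℂ) (s : ℝ),
      f (e₀ + (s:ℂ) • d) = f e₀ + s ^ 2 * nq d + 2 * (s * L d) := by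
    intro d s
    rw [hexp ((s:ℂ) • d), hLsmul, hnqs]
  have hNs : ∀ (d : Fin m → ℂ) (s : ℝ),
      N (e₀ + (s:ℂ) • d) = N e₀ + 2 * (s * P d) + s ^ 2 * N d := by
    intro d s
    rw [hNexp ((s:ℂ) • d), hPsmul, hNsm]
  rcases hNle.lt_or_eq with hi | hbd
  · -- interior minimizer: α = 0
    have hfeas : ∀ d : Fin m → ℂ, ∃ δ : ℝ, 0 < δ ∧
        ∀ s : ℝ, 0 < s → s ≤ δ → (e₀ + (s:ℂ) • d) ∈ K := by
      intro d
      have hNd : 0 ≤ N d := hNnn d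
      have hden : (0:ℝ) < 2 * |P d| + N d + 1 := by
        have := abs_nonneg (P d); linarith
      refine ⟨min 1 ((T - N e₀) / (2 * |P d| + N d + 1)),
        lt_min one_pos (div_pos (by linarith) hden), ?_⟩
      intro s hs0 hsδ
      have hs1 : s ≤ 1 := hsδ.trans (min_le_left _ _)
      have hs2 : s ≤ (T - N e₀) / (2 * |P d| + N d + 1) := hsδ.trans (min_le_right _ _)
      have h5 : s * (2 * |P d| + N d + 1) ≤ T - N e₀ := (le_div_iff₀ hden).mp hs2
      apply hmem
      rw [hNs d s]
      have hb1 : s * P d ≤ s * |P d| :=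
        mul_le_mul_of_nonneg_left (le_abs_self _) hs0.le
      have hb2 : s ^ 2 * N d ≤ s * N d := by
        nlinarith [mul_nonneg (mul_nonneg hs0.le (sub_nonneg.2 hs1)) hNd]
      nlinarith [abs_nonneg (P d)]
    have hL0 : ∀ d, 0 ≤ L d := by
      intro d
      obtain ⟨δ, hδ, hfe⟩ := hfeas d
      have key : ∀ s : ℝ, 0 < s → s ≤ δ → 0 ≤ (2 * L d) * s + nq d * s ^ 2 := by
        intro s h1 h2
        have := hmin _ (hfe s h1 h2)
        rw [hfs d s] at this
        nlinarith
      have := key_small' hδ key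
      linarith
    have hLz : ∀ d, L d = 0 := by
      intro d
      have h1 := hL0 d
      have h2 := hL0 ((((-1:ℝ)):ℂ) • d)
      rw [hLsmul] at h2
      linarith
    have hq0 : ∀ d, 0 ≤ nq d := by
      intro d
      obtain ⟨δ, hδ, hfe⟩ := hfeas d
      have := hmin _ (hfe δ hδ le_rfl)
      rw [hfs d δ, hLz d] at this
      nlinarith [mul_pos hδ hδ]
    refine ⟨0, le_rfl, ?_, ?_⟩
    · intro x
      have := hq0 x
      rw [hnq_def] at this
      simpa using this
    · intro e
      have hw := hexp (e - e₀)
      rw [show e₀ + (e - e₀) = e by abel, hLz] at hw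
      have hqw := hq0 (e - e₀)
      rw [hf_def] at hw hf0
      simp only at hw hf0
      rw [show (star e ⬝ᵥ Q *ᵥ e).re = nq e by rw [hnq_def],
        show (star e ⬝ᵥ b).re = (star e ⬝ᵥ b).re from rfl]
      have hfe : (star e ⬝ᵥ Q *ᵥ e).re + 2 * (star e ⬝ᵥ b).re + c
          = nq e + 2 * (star e ⬝ᵥ b).re + c := by rw [hnq_def]
      rw [hnq_def] at hw hqw
      simp only at hw hqw
      rw [hnq_def]
      simp only
      linarith
  · -- boundary minimizer
    have hbd' : (∑ i, ‖e₀ i‖ ^ 2) = T := by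
      have := hbd
      simp only [hN_def] at this
      exact this
    have hPe₀ : P e₀ = T := by
      simp only [hP_def]
      rw [dot_self_eq, Complex.ofReal_re]
      exact hbd'
    have hP0 : ∀ d : Fin m → ℂ, d = 0 → P d = 0 := by
      intro d hd
      subst hd
      simp only [hP_def]
      simp
    -- first-order condition for strictly inward directions
    have hL1 : ∀ d, P d < 0 → 0 ≤ L d := by
      intro d hPd
      have hNd : 0 ≤ N d := hNnn d
      have hNdpos : 0 < N d := by
        rcases hNd.lt_or_eq with h' | h'
        · exact h'
        · exfalso
          rw [hP0 d (hNzero d h'.symm)] at hPd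
          exact lt_irrefl _ hPd
      have hδpos : (0:ℝ) < min 1 (-2 * P d / N d) :=
        lt_min one_pos (div_pos (by linarith) hNdpos)
      have key : ∀ s : ℝ, 0 < s → s ≤ min 1 (-2 * P d / N d) →
          0 ≤ (2 * L d) * s + nq d * s ^ 2 := by
        intro s h1 h2
        have hs2 : s ≤ -2 * P d / N d := h2.trans (min_le_right _ _)
        have hsN : s * N d ≤ -2 * P d := (le_div_iff₀ hNdpos).mp hs2
        have hKmem : (e₀ + (s:ℂ) • d) ∈ K := by
          apply hmem
          rw [hNs d s, hbd]
          nlinarith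
        have := hmin _ hKmem
        rw [hfs d s] at this
        nlinarith
      have := key_small' hδpos key
      linarith
    -- extend to weakly inward directions
    have hL2 : ∀ d, P d ≤ 0 → 0 ≤ L d := by
      intro d hPd
      have key : ∀ ε : ℝ, 0 < ε → ε ≤ 1 →
          0 ≤ L d + (-(L e₀)) * ε + 0 * ε ^ 2 := by
        intro ε h1 _
        have hP' : P (d + (((-ε : ℝ)):ℂ) • e₀) < 0 := by
          rw [hPadd, hPsmul, hPe₀]
          nlinarith
        have := hL1 _ hP'
        rw [hLadd, hLsmul] at this
        linarith
      have := key_small one_pos key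
      linarith
    -- tangent directions
    have hL3 : ∀ d, P d = 0 → L d = 0 := by
      intro d hPd
      have h1 := hL2 d (le_of_eq hPd)
      have h2 := hL2 ((((-1:ℝ)):ℂ) • d) (by rw [hPsmul, hPd]; simp)
      rw [hLsmul] at h2
      linarith
    -- the multiplier
    have hLe₀ : L e₀ ≤ 0 := by
      have := hL2 ((((-1:ℝ)):ℂ) • e₀) (by rw [hPsmul, hPe₀]; nlinarith)
      rw [hLsmul] at this
      linarith
    obtain ⟨α, hα_def⟩ : ∃ α : ℝ, α = -(L e₀) / T := ⟨_, rfl⟩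
    have hα : 0 ≤ α := by
      rw [hα_def]
      exact div_nonneg (by linarith) hT.le
    have hαT : α * T = -(L e₀) := by
      rw [hα_def]
      field_simp
    -- L is everywhere given by the multiplier
    have hLP : ∀ d, L d = -α * P d := by
      intro d
      have h0 : P (d + (((-(P d / T) : ℝ)):ℂ) • e₀) = 0 := by
        rw [hPadd, hPsmul, hPe₀]
        field_simp
        ring
      have h1 := hL3 _ h0
      rw [hLadd, hLsmul] at h1
      have hT' : T ≠ 0 := ne_of_gt hT
      rw [hα_def]
      field_simp at h1 ⊢
      linarith
    -- PSD of the shifted quadratic form: directions crossing the sphere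
    have f1 : ∀ d, P d ≠ 0 → 0 ≤ nq d + α * N d := by
      intro d hPd
      have hNdpos : 0 < N d := by
        rcases (hNnn d).lt_or_eq with h' | h'
        · exact h'
        · exact absurd (hP0 d (hNzero d h'.symm)) hPd
      obtain ⟨s, hs_def⟩ : ∃ s : ℝ, s = -2 * P d / N d := ⟨_, rfl⟩
      have hs0 : s ≠ 0 := by
        rw [hs_def]
        exact div_ne_zero (by intro hc; apply hPd; linarith) hNdpos.ne'
      have hsN : s * N d = -2 * P d := by
        rw [hs_def]
        exact div_mul_cancel₀ _ hNdpos.ne'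
      have hsq : s ^ 2 * N d = s * (-2 * P d) := by
        rw [pow_two, mul_assoc, hsN]
      have hKmem : (e₀ + (s:ℂ) • d) ∈ K := by
        apply hmem
        rw [hNs d s, hbd]
        nlinarith
      have hmin' := hmin _ hKmem
      rw [hfs d s] at hmin'
      have hPds : P d = -(s * N d) / 2 := by rw [hsN]; ring
      have hsl : 2 * (s * L d) = α * (s ^ 2 * N d) := by
        rw [hLP d, hsq, hPds]
        ring
      have hs2 : 0 < s ^ 2 := lt_of_le_of_ne (sq_nonneg s) (Ne.symm (pow_ne_zero 2 hs0))
      by_contra hneg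
      push_neg at hneg
      have hmul : s ^ 2 * (nq d + α * N d) < 0 := mul_neg_of_pos_of_neg hs2 hneg
      nlinarith
    -- directions not complex-orthogonal to e₀
    have f2 : ∀ d, star d ⬝ᵥ e₀ ≠ 0 → 0 ≤ nq d + α * N d := by
      intro d hz
      by_cases hPd : P d = 0
      · have him : (star d ⬝ᵥ e₀).im ≠ 0 := by
          intro h0
          rw [hP_def] at hPd
          exact hz (Complex.ext hPd h0)
        have hP' : P (Complex.I • d) ≠ 0 := by
          simp only [hP_def]
          rw [star_smul, smul_dotProduct]
          simpa [smul_eq_mul, Complex.mul_re, Complex.conj_I] using him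
        have key := f1 _ hP'
        have hnq' : nq (Complex.I • d) = nq d := by
          simp only [hnq_def]
          rw [star_smul, smul_dotProduct, Matrix.mulVec_smul, dotProduct_smul]
          simp only [smul_eq_mul]
          rw [show star Complex.I * (Complex.I * (star d ⬝ᵥ Q *ᵥ d)) = star d ⬝ᵥ Q *ᵥ d by
            rw [Complex.star_def, Complex.conj_I, ← mul_assoc, neg_mul, Complex.I_mul_I]
            ring]
        have hN' : N (Complex.I • d) = N d := by
          simp only [hN_def]
          simp [norm_smul, Complex.norm_I]
        rw [hnq', hN'] at key
        exact key
      · exact f1 d hPd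
    -- all directions, by perturbation
    have hqα : ∀ d, 0 ≤ nq d + α * N d := by
      intro d
      by_cases hz : star d ⬝ᵥ e₀ = 0
      · have key : ∀ ε : ℝ, 0 < ε → ε ≤ 1 →
            0 ≤ (nq d + α * N d) +
              (2 * (star e₀ ⬝ᵥ Q *ᵥ d).re + α * (2 * (star e₀ ⬝ᵥ d).re)) * ε +
              (nq e₀ + α * T) * ε ^ 2 := by
          intro ε h1 _
          have hz' : star (d + ((ε : ℝ):ℂ) • e₀) ⬝ᵥ e₀ ≠ 0 := by
            rw [star_add, add_dotProduct, hz, zero_add, star_smul,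
              smul_dotProduct, dot_self_eq e₀, hbd']
            simp only [smul_eq_mul, Complex.star_def, Complex.conj_ofReal]
            exact mul_ne_zero (by exact_mod_cast ne_of_gt h1) (by exact_mod_cast ne_of_gt hT)
          have key2 := f2 _ hz'
          have hcross : (star (((ε:ℝ):ℂ) • e₀) ⬝ᵥ Q *ᵥ d).re
              = ε * (star e₀ ⬝ᵥ Q *ᵥ d).re := smul_dot_re ε e₀ (Q *ᵥ d)
          have e1 : nq (d + ((ε : ℝ):ℂ) • e₀)
              = nq d + 2 * (ε * (star e₀ ⬝ᵥ Q *ᵥ d).re) + ε ^ 2 * nq e₀ := by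
            simp only [hnq_def]
            rw [qf_add hQ d (((ε:ℝ):ℂ) • e₀), hcross, qf_smul_real ε e₀]
          have e2 : N (d + ((ε : ℝ):ℂ) • e₀)
              = N d + 2 * (ε * (star e₀ ⬝ᵥ d).re) + ε ^ 2 * T := by
            simp only [hN_def]
            rw [nf_add d (((ε:ℝ):ℂ) • e₀), smul_dot_re ε e₀ d, nf_smul_real ε e₀, hbd']
          rw [e1, e2] at key2
          nlinarith
        have := key_small one_pos key
        linarith
      · exact f2 d hz
    refine ⟨α, hα, ?_, ?_⟩
    · intro x
      have := hqα x
      rw [hnq_def, hN_def] at this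
      simpa using this
    · intro e
      have hw := hexp (e - e₀)
      rw [show e₀ + (e - e₀) = e by abel] at hw
      have hN' := hNexp (e - e₀)
      rw [show e₀ + (e - e₀) = e by abel, hbd] at hN'
      have hLw := hLP (e - e₀)
      have hq' := hqα (e - e₀)
      have hαN : α * N e = α * T + 2 * (α * P (e - e₀)) + α * N (e - e₀) := by
        rw [hN']
        ring
      have hfe : f e = nq e + 2 * (star e ⬝ᵥ b).re + c := by
        rw [hf_def, hnq_def]
      rw [show (star e ⬝ᵥ Q *ᵥ e).re = nq e by rw [hnq_def],
        show (∑ i, ‖e i‖ ^ 2) = N e by rw [hN_def]]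
      linarith

/-- Quadratic-form scaling by a complex scalar. -/
lemma csmul_dot (c : ℂ) (u b : Fin m → ℂ) :
    star (c • u) ⬝ᵥ b = star c * (star u ⬝ᵥ b) := by
  rw [star_smul, smul_dotProduct]
  simp [smul_eq_mul]

lemma csmul_quad (c : ℂ) (M : Matrix (Fin m) (Fin m) ℂ) (u : Fin m → ℂ) :
    star (c • u) ⬝ᵥ M *ᵥ (c • u) = star c * c * (star u ⬝ᵥ M *ᵥ u) := by
  rw [star_smul, smul_dotProduct, Matrix.mulVec_smul, dotProduct_smul]
  simp [smul_eq_mul]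
  ring

lemma nf_smul_c (c : ℂ) (u : Fin m → ℂ) :
    (∑ i, ‖(c • u) i‖ ^ 2) = ‖c‖ ^ 2 * ∑ i, ‖u i‖ ^ 2 := by
  simp [norm_smul, mul_pow, Finset.mul_sum]

lemma star_tau_tau (τ : ℂ) : star τ * τ = ((‖τ‖ ^ 2 : ℝ) : ℂ) := by
  rw [RCLike.star_def, Complex.conj_mul']
  norm_cast

/-- Splitting the quadratic form of `blockMat` into real components. -/
lemma block_dot {Km : Matrix (Fin m) (Fin m) ℂ} (hKm : Km.IsHermitian)
    (b' : Fin m → ℂ) (c' : ℝ) (z : Fin m ⊕ Fin 1 → ℂ) :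
    star z ⬝ᵥ (blockMat Km b' c') *ᵥ z =
      ((((star fun i => z (Sum.inl i)) ⬝ᵥ Km *ᵥ fun i => z (Sum.inl i)).re
        + 2 * (z (Sum.inr 0) * ((star fun i => z (Sum.inl i)) ⬝ᵥ b')).re
        + c' * ‖z (Sum.inr 0)‖ ^ 2 : ℝ) : ℂ) := by
  classical
  have dot_split : ∀ u v : Fin m ⊕ Fin 1 → ℂ,
      u ⬝ᵥ v = (fun i => u (Sum.inl i)) ⬝ᵥ (fun i => v (Sum.inl i))
        + u (Sum.inr 0) * v (Sum.inr 0) := by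
    intro u v
    simp [dotProduct, Fintype.sum_sum_type]
  set x : Fin m → ℂ := fun i => z (Sum.inl i) with hx_def
  set τ : ℂ := z (Sum.inr 0) with hτ_def
  have hWl : (fun i => ((blockMat Km b' c') *ᵥ z) (Sum.inl i))
      = fun i => (Km *ᵥ x) i + b' i * τ := by
    funext i
    simp [blockMat, Matrix.mulVec, dotProduct, Fintype.sum_sum_type,
      Matrix.fromBlocks, hx_def, hτ_def]
  have hWr : ((blockMat Km b' c') *ᵥ z) (Sum.inr 0)
      = (star b' ⬝ᵥ x) + (c' : ℂ) * τ := by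
    simp [blockMat, Matrix.mulVec, dotProduct, Fintype.sum_sum_type,
      Matrix.fromBlocks, hx_def, hτ_def]
  have step : star z ⬝ᵥ (blockMat Km b' c') *ᵥ z
      = (star x ⬝ᵥ Km *ᵥ x) + (τ * (star x ⬝ᵥ b') + star (τ * (star x ⬝ᵥ b')))
        + (c' : ℂ) * (star τ * τ) := by
    rw [dot_split (star z) ((blockMat Km b' c') *ᵥ z)]
    have h1 : (fun i => (star z) (Sum.inl i)) = star x := by
      funext i; simp [hx_def]
    have h2 : (star z) (Sum.inr 0) = star τ := by simp [hτ_def]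
    rw [h1, h2, hWl, hWr]
    have h3 : star x ⬝ᵥ (fun i => (Km *ᵥ x) i + b' i * τ)
        = star x ⬝ᵥ Km *ᵥ x + τ * (star x ⬝ᵥ b') := by
      rw [show (fun i => (Km *ᵥ x) i + b' i * τ) = (Km *ᵥ x) + fun i => b' i * τ from rfl,
        dotProduct_add]
      congr 1
      simp [dotProduct, Finset.mul_sum]
      exact Finset.sum_congr rfl fun i _ => by ring
    rw [h3]
    have h4 : star b' ⬝ᵥ x = star (star x ⬝ᵥ b') := Matrix.star_dotProduct b' x
    rw [h4]
    have h5 : star (τ * (star x ⬝ᵥ b')) = star τ * star (star x ⬝ᵥ b') := star_mul' τ _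
    rw [h5]
    ring
  rw [step]
  have hre : star x ⬝ᵥ Km *ᵥ x = (((star x ⬝ᵥ Km *ᵥ x).re : ℝ) : ℂ) := by
    have := herm_star hKm x x
    rw [RCLike.star_def] at this
    exact (Complex.conj_eq_iff_re.mp this).symm
  have hcross : τ * (star x ⬝ᵥ b') + star (τ * (star x ⬝ᵥ b'))
      = (((2 * (τ * (star x ⬝ᵥ b')).re : ℝ)) : ℂ) := by
    rw [RCLike.star_def, Complex.add_conj]
  rw [hcross, star_tau_tau]
  nth_rewrite 1 [hre]
  push_cast
  ring

end SPaux

open SPaux in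
/-- S-procedure transformation of the sphere-bounded robust SINR constraint into a
linear matrix inequality (first LMI of problem (13) of the paper). -/
theorem sphere_constraint_iff_lmi (M : ℕ) (hM : 1 ≤ M)
    (A S : Matrix (Fin M) (Fin M) ℂ) (hA : A.IsHermitian) (hS : S.IsHermitian)
    (ht : Fin M → ℂ) (σsq : ℝ) (T : ℝ) (hT : 0 < T) :
    (∀ e : Fin M → ℂ, (∑ i, ‖e i‖ ^ 2) ≤ T →
      0 ≤ (star e ⬝ᵥ (S * A * S).mulVec e).re +
          2 * (star e ⬝ᵥ (S * A).mulVec ht).re +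
          (star ht ⬝ᵥ A.mulVec ht).re - σsq) ↔
    (∃ α : ℝ, 0 ≤ α ∧
      (blockMat (S * A * S + (α : ℂ) • (1 : Matrix (Fin M) (Fin M) ℂ))
        ((S * A).mulVec ht)
        ((star ht ⬝ᵥ A.mulVec ht).re - σsq - α * T)).PosSemidef) := by
  have hQm : (S * A * S).IsHermitian := by
    show (S * A * S)ᴴ = S * A * S
    rw [Matrix.conjTranspose_mul, Matrix.conjTranspose_mul, hS.eq, hA.eq, ← Matrix.mul_assoc]
  have hKH : ∀ α : ℝ, (S * A * S + (α:ℂ) • (1 : Matrix (Fin M) (Fin M) ℂ)).IsHermitian := by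
    intro α
    apply Matrix.IsHermitian.add hQm
    show ((α:ℂ) • (1 : Matrix (Fin M) (Fin M) ℂ))ᴴ = _
    rw [Matrix.conjTranspose_smul, Matrix.conjTranspose_one]
    congr 1
    exact Complex.conj_ofReal α
  have hBH : ∀ (α : ℝ) (c' : ℝ),
      (blockMat (S * A * S + (α:ℂ) • (1 : Matrix (Fin M) (Fin M) ℂ))
        ((S * A).mulVec ht) c').IsHermitian := by
    intro α c'
    show _ᴴ = _
    ext i j
    rcases i with i | i <;> rcases j with j | j
    · simp only [blockMat, Matrix.conjTranspose_apply, Matrix.fromBlocks_apply₁₁]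
      exact (hKH α).apply i j
    · simp only [blockMat, Matrix.conjTranspose_apply, Matrix.fromBlocks_apply₁₂,
        Matrix.fromBlocks_apply₂₁, Matrix.of_apply]
      exact star_star _
    · simp only [blockMat, Matrix.conjTranspose_apply, Matrix.fromBlocks_apply₂₁,
        Matrix.fromBlocks_apply₁₂, Matrix.of_apply]
    · simp only [blockMat, Matrix.conjTranspose_apply, Matrix.fromBlocks_apply₂₂,
        Matrix.of_apply]
      exact Complex.conj_ofReal c'
  have hKform : ∀ (α : ℝ) (x : Fin M → ℂ),
      (star x ⬝ᵥ (S * A * S + (α:ℂ) • (1 : Matrix (Fin M) (Fin M) ℂ)) *ᵥ x).re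
        = (star x ⬝ᵥ (S * A * S) *ᵥ x).re + α * ∑ i, ‖x i‖ ^ 2 := by
    intro α x
    rw [Matrix.add_mulVec, dotProduct_add, Matrix.smul_mulVec,
      Matrix.one_mulVec, dotProduct_smul, dot_self_eq]
    simp only [smul_eq_mul]
    rw [Complex.add_re, ← Complex.ofReal_mul, Complex.ofReal_re]
  constructor
  · intro hcon
    obtain ⟨α, hα, hpsd1, hpsd2⟩ := s_procedure (S * A * S) hQm ((S * A).mulVec ht)
        ((star ht ⬝ᵥ A.mulVec ht).re - σsq) T hT
        (by intro e he; have := hcon e he; linarith)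
    refine ⟨α, hα, Matrix.PosSemidef.of_dotProduct_mulVec_nonneg (hBH α _) ?_⟩
    intro z
    rw [block_dot (hKH α), Complex.zero_le_real, hKform α]
    set x : Fin M → ℂ := fun i => z (Sum.inl i) with hx_def
    set τ : ℂ := z (Sum.inr 0) with hτ_def
    by_cases hτ : τ = 0
    · rw [hτ]
      simp only [zero_mul, Complex.zero_re, mul_zero, norm_zero]
      have := hpsd1 x
      nlinarith
    · obtain ⟨e, he_def⟩ : ∃ e : Fin M → ℂ, e = τ⁻¹ • x := ⟨_, rfl⟩
      have hx : x = τ • e := by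
        rw [he_def, smul_smul, mul_inv_cancel₀ hτ, one_smul]
      have hr : (star x ⬝ᵥ (S * A * S) *ᵥ x).re
          = ‖τ‖ ^ 2 * (star e ⬝ᵥ (S * A * S) *ᵥ e).re := by
        rw [hx, csmul_quad, star_tau_tau, Complex.re_ofReal_mul]
      have hnx : (∑ i, ‖x i‖ ^ 2) = ‖τ‖ ^ 2 * ∑ i, ‖e i‖ ^ 2 := by
        rw [hx]
        exact nf_smul_c τ e
      have hlx : (τ * (star x ⬝ᵥ (S * A).mulVec ht)).re
          = ‖τ‖ ^ 2 * (star e ⬝ᵥ (S * A).mulVec ht).re := by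
        rw [hx, csmul_dot, show τ * (star τ * (star e ⬝ᵥ (S * A).mulVec ht))
            = (star τ * τ) * (star e ⬝ᵥ (S * A).mulVec ht) by ring,
          star_tau_tau, Complex.re_ofReal_mul]
      rw [hr, hnx, hlx]
      have hkey := hpsd2 e
      have hτ2 : (0:ℝ) ≤ ‖τ‖ ^ 2 := by positivity
      nlinarith
  · rintro ⟨α, hα, hpsd⟩ e he
    have hz := hpsd.dotProduct_mulVec_nonneg (Sum.elim e fun _ => 1)
    rw [block_dot (hKH α), Complex.zero_le_real] at hz
    simp only [Sum.elim_inl, Sum.elim_inr] at hz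
    rw [hKform α] at hz
    simp only [norm_one, one_pow, mul_one, one_mul] at hz
    have hαTe : 0 ≤ α * (T - ∑ i, ‖e i‖ ^ 2) := mul_nonneg hα (by linarith)
    nlinarith
end
end
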